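/- arXiv:2304.09167 — 4 statements merged into one kernel-verified Lean document; each statement's English description precedes it below -/
import Mathlib

section
/- Let W_1, ..., W_T be a stochastic process adapted to a filtration (F_t) with 0 ≤ W_t ≤ 1 almost surely. Then for any δ ∈ (0,1) and η ∈ (0,1], with probability at least 1 − δ, the sum ∑_{t=1}^T E[W_t | F_{t−1}] is at most (η e^η/(e^η − 1)) · ∑_{t=1}^T W_t + (e^η/(e^η − 1)) · log(1/δ). -/
open MeasureTheory Real Finset

/-- Martingale Chernoff bound (lower tail): for an adapted `[0,1]`-bounded process
`W_1, ..., W_T`, with probability at least `1 - δ`,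
`∑ E[W_t | F_{t-1}] ≤ (η e^η/(e^η - 1)) ∑ W_t + (e^η/(e^η - 1)) log(1/δ)`. -/
theorem stmt1 {Ω : Type*} {m0 : MeasurableSpace Ω} (μ : Measure Ω) [IsProbabilityMeasure μ]
    (T : ℕ) (ℱ : Filtration ℕ m0) (W : ℕ → Ω → ℝ)
    (hadapted : Adapted ℱ W)
    (hbdd : ∀ t, ∀ᵐ ω ∂μ, W t ω ∈ Set.Icc (0 : ℝ) 1)
    (δ η : ℝ) (hδ : δ ∈ Set.Ioo (0 : ℝ) 1) (hη : η ∈ Set.Ioc (0 : ℝ) 1) :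
    ENNReal.ofReal (1 - δ) ≤
      μ {ω | ∑ t ∈ Finset.Icc 1 T, (μ[W t | ℱ (t - 1)]) ω ≤
        (η * Real.exp η / (Real.exp η - 1)) * ∑ t ∈ Finset.Icc 1 T, W t ω
          + (Real.exp η / (Real.exp η - 1)) * Real.log (1 / δ)} := by
  obtain ⟨hδ0, hδ1⟩ := hδ
  obtain ⟨hη0, hη1⟩ := hη
  have hexp1 : (1:ℝ) < Real.exp η := by
    have := Real.add_one_lt_exp (ne_of_gt hη0); linarith
  have hexppos : (0:ℝ) < Real.exp η - 1 := by linarith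
  set a : ℝ := 1 - Real.exp (-η) with ha_def
  have ha0 : 0 < a := by
    have : Real.exp (-η) < Real.exp 0 := Real.exp_lt_exp.2 (by linarith)
    simp only [Real.exp_zero] at this
    simp [ha_def]; linarith
  have ha1 : a ≤ 1 := by
    have := Real.exp_pos (-η); simp [ha_def]; linarith
  set E : ℕ → Ω → ℝ := fun s => μ[W s | ℱ (s - 1)] with hE_def
  have hWsm : ∀ s, StronglyMeasurable (W s) := fun s => ((hadapted s).mono (ℱ.le s) le_rfl).stronglyMeasurable
  have hWint : ∀ s, Integrable (W s) μ := by
    intro s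
    refine Integrable.mono' (integrable_const 1) (hWsm s).aestronglyMeasurable ?_
    filter_upwards [hbdd s] with ω h
    rw [Real.norm_eq_abs, abs_le]; exact ⟨by linarith [h.1], h.2⟩
  have hE0 : ∀ s, 0 ≤ᵐ[μ] E s := fun s =>
    condExp_nonneg ((hbdd s).mono fun ω h => h.1)
  have hE1 : ∀ s, E s ≤ᵐ[μ] fun _ => (1:ℝ) := by
    intro s
    have h := condExp_mono (m := ℱ (s-1)) (hWint s) (integrable_const 1)
      ((hbdd s).mono fun ω h => h.2)
    rwa [condExp_const (ℱ.le (s-1)) (1:ℝ)] at h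
  have hgood : ∀ᵐ ω ∂μ, ∀ s, (0 ≤ W s ω ∧ W s ω ≤ 1) ∧ 0 ≤ E s ω ∧ E s ω ≤ 1 := by
    rw [ae_all_iff]
    intro s
    filter_upwards [hbdd s, hE0 s, hE1 s] with ω h1 h2 h3
    exact ⟨⟨h1.1, h1.2⟩, h2, h3⟩
  set S : ℕ → Ω → ℝ := fun t ω => ∑ s ∈ Finset.Icc 1 t, (a * E s ω - η * W s ω) with hS_def
  set f : ℕ → Ω → ℝ := fun t ω => Real.exp (S t ω) with hf_def
  have hEsm : ∀ s t, s - 1 ≤ t → StronglyMeasurable[ℱ t] (E s) := fun s t h =>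
    stronglyMeasurable_condExp.mono (ℱ.mono h)
  have hfF : ∀ t, StronglyMeasurable[ℱ t] (f t) := by
    intro t
    have hSsm : StronglyMeasurable[ℱ t] (S t) := by
      apply Finset.stronglyMeasurable_fun_sum
      intro s hs
      rw [Finset.mem_Icc] at hs
      exact ((hEsm s t (by omega)).const_mul a).sub
        (((hadapted s).mono (ℱ.mono hs.2) le_rfl).stronglyMeasurable.const_mul η)
    exact Real.continuous_exp.comp_stronglyMeasurable hSsm
  have hfbound : ∀ t, ∀ᵐ ω ∂μ, ‖f t ω‖ ≤ Real.exp (t * a) := by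
    intro t
    filter_upwards [hgood] with ω hω
    rw [Real.norm_eq_abs, abs_of_pos (Real.exp_pos _), Real.exp_le_exp]
    calc S t ω ≤ ∑ s ∈ Finset.Icc 1 t, a := by
          apply Finset.sum_le_sum
          intro s _
          obtain ⟨⟨h1, h2⟩, h3, h4⟩ := hω s
          nlinarith
      _ = (t:ℝ) * a := by
          rw [Finset.sum_const, Nat.card_Icc, nsmul_eq_mul]
          norm_num
  have hfint : ∀ t, Integrable (f t) μ := fun t =>
    Integrable.mono' (integrable_const _)
      ((hfF t).mono (ℱ.le t)).aestronglyMeasurable (hfbound t)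
  -- supermartingale property by induction
  have hkey : ∀ t, ∫ ω, f t ω ∂μ ≤ 1 := by
    intro t
    induction t with
    | zero =>
      simp only [hf_def, hS_def]
      simp
    | succ t ih =>
      set g : Ω → ℝ := fun ω => f t ω * Real.exp (a * E (t+1) ω) with hg_def
      set X : Ω → ℝ := fun ω => Real.exp (-(η * W (t+1) ω)) with hX_def
      have hstep : ∀ ω, f (t+1) ω = g ω * X ω := by
        intro ω
        have h' : S (t+1) ω = S t ω + (a * E (t+1) ω + -(η * W (t+1) ω)) := by
          simp only [hS_def]
          rw [Finset.sum_Icc_succ_top (Nat.le_add_left 1 t)]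
          ring
        simp only [hf_def, hg_def, hX_def, h', Real.exp_add]
        ring
      have hEt1 : StronglyMeasurable[ℱ t] (E (t+1)) := hEsm (t+1) t (by omega)
      have hgF : StronglyMeasurable[ℱ t] g :=
        (hfF t).mul (Real.continuous_exp.comp_stronglyMeasurable (hEt1.const_mul a))
      have hgm0 : AEStronglyMeasurable g μ := (hgF.mono (ℱ.le t)).aestronglyMeasurable
      have hg0 : ∀ ω, 0 ≤ g ω := fun ω =>
        mul_nonneg (Real.exp_pos _).le (Real.exp_pos _).le
      have hgbound : ∀ᵐ ω ∂μ, g ω ≤ Real.exp ((t:ℝ) * a) * Real.exp a := by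
        filter_upwards [hfbound t, hgood] with ω h1 h2
        rw [Real.norm_eq_abs, abs_of_pos (Real.exp_pos _)] at h1
        have h3 : Real.exp (a * E (t+1) ω) ≤ Real.exp a := by
          rw [Real.exp_le_exp]
          nlinarith [(h2 (t+1)).2.1, (h2 (t+1)).2.2]
        exact mul_le_mul h1 h3 (Real.exp_pos _).le (Real.exp_pos _).le
      have hXm : AEStronglyMeasurable X μ :=
        (Real.continuous_exp.comp_stronglyMeasurable
          (((hWsm (t+1)).const_mul η).neg)).aestronglyMeasurable
      have hX1 : ∀ᵐ ω ∂μ, X ω ≤ 1 := by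
        filter_upwards [hbdd (t+1)] with ω h
        rw [hX_def]
        calc Real.exp (-(η * W (t+1) ω)) ≤ Real.exp 0 := by
              rw [Real.exp_le_exp]; nlinarith [h.1]
          _ = 1 := Real.exp_zero
      have hXint : Integrable X μ := by
        refine Integrable.mono' (integrable_const 1) hXm ?_
        filter_upwards [hX1] with ω h
        rw [Real.norm_eq_abs, abs_of_pos (Real.exp_pos _)]; exact h
      have hgXint : Integrable (g * X) μ := by
        refine Integrable.mono' (integrable_const (Real.exp ((t:ℝ)*a) * Real.exp a)) (hgm0.mul hXm) ?_
        filter_upwards [hgbound, hX1] with ω h1 h2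
        rw [Pi.mul_apply, Real.norm_eq_abs, abs_of_nonneg (mul_nonneg (hg0 ω) (Real.exp_pos _).le)]
        calc g ω * X ω ≤ g ω * 1 := by
              exact mul_le_mul_of_nonneg_left h2 (hg0 ω)
          _ ≤ Real.exp ((t:ℝ)*a) * Real.exp a := by rw [mul_one]; exact h1
      -- conditional expectation bound
      have hcond1 : X ≤ᵐ[μ] fun ω => 1 - a * W (t+1) ω := by
        filter_upwards [hbdd (t+1)] with ω h
        rw [hX_def]
        have hc := convexOn_exp.2 (Set.mem_univ (-η)) (Set.mem_univ 0) h.1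
          (sub_nonneg.2 h.2) (by ring)
        simp only [smul_eq_mul, mul_zero, add_zero, Real.exp_zero, mul_one] at hc
        calc Real.exp (-(η * W (t+1) ω)) = Real.exp (W (t+1) ω * -η) := by ring_nf
          _ ≤ W (t+1) ω * Real.exp (-η) + (1 - W (t+1) ω) := hc
          _ = 1 - a * W (t+1) ω := by rw [ha_def]; ring
      have hint2 : Integrable (fun ω => 1 - a * W (t+1) ω) μ := by
        have := (integrable_const (1:ℝ)).sub ((hWint (t+1)).const_mul a)
        exact this
      have hcond2 : μ[X|ℱ t] ≤ᵐ[μ] μ[fun ω => 1 - a * W (t+1) ω|ℱ t] :=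
        condExp_mono hXint hint2 hcond1
      have hcond3 : μ[fun ω => 1 - a * W (t+1) ω|ℱ t] =ᵐ[μ] fun ω => 1 - a * E (t+1) ω := by
        have e1 : (fun ω => 1 - a * W (t+1) ω) = (fun _ : Ω => (1:ℝ)) - a • (W (t+1)) := by
          funext ω; simp [smul_eq_mul]
        rw [e1]
        have h1 := condExp_sub (μ := μ) (m := ℱ t) (integrable_const (1:ℝ))
          ((hWint (t+1)).smul a)
        have h2 := condExp_smul (μ := μ) (m := ℱ t) a (W (t+1))
        have h3 := condExp_const (μ := μ) (ℱ.le t) (1:ℝ)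
        filter_upwards [h1, h2] with ω hω1 hω2
        have hE' : E (t+1) = μ[W (t+1)|ℱ t] := by rw [hE_def]; norm_num
        rw [hω1]
        simp only [Pi.sub_apply, h3, Pi.smul_apply, smul_eq_mul] at hω2 ⊢
        rw [hω2, hE']
      have hcond4 : μ[X|ℱ t] ≤ᵐ[μ] fun ω => Real.exp (-(a * E (t+1) ω)) := by
        filter_upwards [hcond2, hcond3] with ω h2 h3
        calc (μ[X|ℱ t]) ω ≤ (μ[fun ω => 1 - a * W (t+1) ω|ℱ t]) ω := h2
          _ = 1 - a * E (t+1) ω := h3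
          _ ≤ Real.exp (-(a * E (t+1) ω)) := by
              have := Real.add_one_le_exp (-(a * E (t+1) ω)); linarith
      have hcondint : Integrable (fun ω => g ω * (μ[X|ℱ t]) ω) μ := by
        have hcm : AEStronglyMeasurable (μ[X|ℱ t]) μ :=
          (stronglyMeasurable_condExp.mono (ℱ.le t)).aestronglyMeasurable
        refine Integrable.mono' (integrable_const (Real.exp ((t:ℝ)*a) * Real.exp a))
          (hgm0.mul hcm) ?_
        have hc0 : 0 ≤ᵐ[μ] μ[X|ℱ t] :=
          condExp_nonneg (ae_of_all μ fun ω => (Real.exp_pos _).le)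
        have hc1 : μ[X|ℱ t] ≤ᵐ[μ] fun _ => (1:ℝ) := by
          have h := condExp_mono (m := ℱ t) hXint (integrable_const 1) hX1
          rwa [condExp_const (ℱ.le t) (1:ℝ)] at h
        filter_upwards [hgbound, hc0, hc1] with ω h1 h2 h3
        rw [Real.norm_eq_abs, abs_of_nonneg (mul_nonneg (hg0 ω) h2)]
        calc g ω * (μ[X|ℱ t]) ω ≤ g ω * 1 := mul_le_mul_of_nonneg_left h3 (hg0 ω)
          _ ≤ Real.exp ((t:ℝ)*a) * Real.exp a := by rw [mul_one]; exact h1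
      calc ∫ ω, f (t+1) ω ∂μ = ∫ ω, (g * X) ω ∂μ := by
            exact integral_congr_ae (ae_of_all μ hstep)
        _ = ∫ ω, (μ[g * X|ℱ t]) ω ∂μ := (integral_condExp (ℱ.le t)).symm
        _ = ∫ ω, g ω * (μ[X|ℱ t]) ω ∂μ :=
            integral_congr_ae (condExp_mul_of_stronglyMeasurable_left hgF hgXint hXint)
        _ ≤ ∫ ω, f t ω ∂μ := by
            apply integral_mono_ae hcondint (hfint t)
            filter_upwards [hcond4] with ω h4
            calc g ω * (μ[X|ℱ t]) ω ≤ g ω * Real.exp (-(a * E (t+1) ω)) :=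
                  mul_le_mul_of_nonneg_left h4 (hg0 ω)
              _ = f t ω := by
                  rw [hg_def, mul_assoc, ← Real.exp_add, add_neg_cancel, Real.exp_zero, mul_one]
        _ ≤ 1 := ih
  -- Markov inequality
  have hmarkov := mul_meas_ge_le_integral_of_nonneg
    (ae_of_all μ fun ω => (Real.exp_pos (S T ω)).le) (hfint T) (1/δ)
  have hbadR : (μ {ω | 1/δ ≤ f T ω}).toReal ≤ δ := by
    have h2 : (1/δ) * (μ {ω | 1/δ ≤ f T ω}).toReal ≤ 1 := hmarkov.trans (hkey T)
    have hδ' : δ * (1/δ) = 1 := mul_one_div_cancel (ne_of_gt hδ0)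
    nlinarith [ENNReal.toReal_nonneg (a := μ {ω | 1/δ ≤ f T ω})]
  have hbad : μ {ω | 1/δ ≤ f T ω} ≤ ENNReal.ofReal δ := by
    rw [← ENNReal.ofReal_toReal (measure_ne_top μ {ω | 1/δ ≤ f T ω})]
    exact ENNReal.ofReal_le_ofReal hbadR
  set good := {ω | ∑ t ∈ Finset.Icc 1 T, E t ω ≤
      (η * Real.exp η / (Real.exp η - 1)) * ∑ t ∈ Finset.Icc 1 T, W t ω
        + (Real.exp η / (Real.exp η - 1)) * Real.log (1 / δ)} with hgood_def
  have hsub : goodᶜ ⊆ {ω | 1/δ ≤ f T ω} := by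
    intro ω hω
    simp only [hgood_def, Set.mem_compl_iff, Set.mem_setOf_eq, not_le] at hω
    by_contra hc
    simp only [Set.mem_setOf_eq, not_le] at hc
    have hlog : S T ω < Real.log (1/δ) := by
      rw [Real.lt_log_iff_exp_lt (by positivity)]
      exact hc
    set SE := ∑ t ∈ Finset.Icc 1 T, E t ω with hSE
    set SW := ∑ t ∈ Finset.Icc 1 T, W t ω with hSW
    set L := Real.log (1/δ) with hL
    have hsum : a * SE - η * SW ≤ L := by
      have hS' : S T ω = a * SE - η * SW := by
        simp only [hS_def, hSE, hSW]
        rw [Finset.sum_sub_distrib, ← Finset.mul_sum, ← Finset.mul_sum]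
      linarith
    have ha_eq : a = (Real.exp η - 1) / Real.exp η := by
      rw [ha_def, Real.exp_neg]
      field_simp
    rw [ha_eq] at hsum
    have hm2 := mul_le_mul_of_nonneg_left hsum (Real.exp_pos η).le
    have hexpand : Real.exp η * ((Real.exp η - 1) / Real.exp η * SE - η * SW)
        = (Real.exp η - 1) * SE - Real.exp η * (η * SW) := by
      field_simp
    rw [hexpand] at hm2
    have htar : η * Real.exp η / (Real.exp η - 1) * SW + Real.exp η / (Real.exp η - 1) * L
        = (Real.exp η * (η * SW) + Real.exp η * L) / (Real.exp η - 1) := by ring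
    have hfin : SE ≤ η * Real.exp η / (Real.exp η - 1) * SW + Real.exp η / (Real.exp η - 1) * L := by
      rw [htar, le_div_iff₀ hexppos]
      nlinarith [hm2]
    linarith
  have hgoodmeas : MeasurableSet good := by
    apply measurableSet_le
    · exact Finset.measurable_sum _ fun s _ =>
        (stronglyMeasurable_condExp.mono (ℱ.le (s-1))).measurable
    · apply Measurable.add
      · exact (Finset.measurable_sum _ fun s _ => (hWsm s).measurable).const_mul _
      · exact measurable_const
  have h1 : μ goodᶜ ≤ ENNReal.ofReal δ := (measure_mono hsub).trans hbad
  have h2 : (1:ENNReal) - μ goodᶜ = μ good := by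
    rw [prob_compl_eq_one_sub hgoodmeas]
    exact ENNReal.sub_sub_cancel ENNReal.one_ne_top prob_le_one
  calc ENNReal.ofReal (1 - δ) = 1 - ENNReal.ofReal δ := by
        rw [ENNReal.ofReal_sub 1 hδ0.le, ENNReal.ofReal_one]
    _ ≤ 1 - μ goodᶜ := tsub_le_tsub_left h1 1
    _ = μ good := h2
end

section
/- Let W_1, ..., W_T be adapted to a filtration (F_t) with 0 ≤ W_t ≤ 1 a.s., and fix η ∈ (0,1]. Then the process Π_{t=1}^T exp(−η W_t + (1 − e^{−η}) E[W_t | F_{t−1}]) has expectation at most 1. -/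
open MeasureTheory Real Finset

lemma exp_le_one_sub_mul {η x : ℝ} (hx : x ∈ Set.Icc (0:ℝ) 1) :
    Real.exp (-η * x) ≤ 1 - (1 - Real.exp (-η)) * x := by
  have h := convexOn_exp.2 (Set.mem_univ (0:ℝ)) (Set.mem_univ (-η))
    (by linarith [hx.2] : (0:ℝ) ≤ 1 - x) hx.1 (by ring)
  simp only [smul_eq_mul, mul_zero, zero_add, Real.exp_zero] at h
  have : x * -η = -η * x := by ring
  rw [this] at h
  linarith

/-- The exponential process `∏_{t=1}^T exp(-η W_t + (1 - e^{-η}) E[W_t | F_{t-1}])` has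
expectation at most 1, for an adapted `[0,1]`-bounded process and `η ∈ (0,1]`. -/
theorem stmt3 {Ω : Type*} {m0 : MeasurableSpace Ω} (μ : Measure Ω) [IsProbabilityMeasure μ]
    (T : ℕ) (ℱ : Filtration ℕ m0) (W : ℕ → Ω → ℝ)
    (hadapted : Adapted ℱ W)
    (hbdd : ∀ t, ∀ᵐ ω ∂μ, W t ω ∈ Set.Icc (0 : ℝ) 1)
    (η : ℝ) (hη : η ∈ Set.Ioc (0 : ℝ) 1) :
    ∫ ω, ∏ t ∈ Finset.Icc 1 T,
        Real.exp (-η * W t ω + (1 - Real.exp (-η)) * (μ[W t | ℱ (t - 1)]) ω) ∂μ ≤ 1 := by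
  obtain ⟨hη0, hη1⟩ := hη
  set c : ℝ := 1 - Real.exp (-η) with hc
  have hexpη1 : Real.exp (-η) ≤ 1 := by
    rw [Real.exp_le_one_iff]; linarith
  have hc0 : 0 ≤ c := by simp only [hc]; linarith
  have hc1 : c ≤ 1 := by
    have := Real.exp_pos (-η); simp only [hc]; linarith
  set E : ℕ → Ω → ℝ := fun t => μ[W t | ℱ (t - 1)] with hE
  set f : ℕ → Ω → ℝ := fun t ω => Real.exp (-η * W t ω + c * E t ω) with hf
  -- basic measurability / integrability facts
  have hWm : ∀ t, AEStronglyMeasurable (W t) μ :=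
    fun t => ((hadapted t).mono (ℱ.le t) le_rfl).aestronglyMeasurable
  have hWint : ∀ t, Integrable (W t) μ := by
    intro t
    refine ⟨hWm t, HasFiniteIntegral.of_bounded (C := 1) ?_⟩
    filter_upwards [hbdd t] with ω h
    rw [Real.norm_eq_abs, abs_le]; exact ⟨by linarith [h.1], h.2⟩
  have hEbdd : ∀ t, ∀ᵐ ω ∂μ, E t ω ∈ Set.Icc (0:ℝ) 1 := by
    intro t
    have h0 : (0:Ω → ℝ) ≤ᵐ[μ] E t := by
      refine condExp_nonneg ?_
      filter_upwards [hbdd t] with ω h using h.1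
    have h1 : E t ≤ᵐ[μ] μ[(fun _ => (1:ℝ)) | ℱ (t-1)] := by
      refine condExp_mono (hWint t) (integrable_const 1) ?_
      filter_upwards [hbdd t] with ω h using h.2
    rw [condExp_const (ℱ.le (t-1)) (1:ℝ)] at h1
    filter_upwards [h0, h1] with ω h0 h1 using ⟨h0, h1⟩
  have hfSM : ∀ t, StronglyMeasurable[ℱ t] (f t) := by
    intro t
    exact Real.continuous_exp.comp_stronglyMeasurable
      (((hadapted t).stronglyMeasurable.const_mul (-η)).add
        ((stronglyMeasurable_condExp.mono (ℱ.mono (t.sub_le 1))).const_mul c))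
  set P : ℕ → Ω → ℝ := fun n ω => ∏ t ∈ Finset.Icc 1 n, f t ω with hP
  have hPSM : ∀ n, StronglyMeasurable[ℱ n] (P n) := by
    intro n
    exact Finset.stronglyMeasurable_fun_prod _
      (fun t ht => (hfSM t).mono (ℱ.mono (Finset.mem_Icc.mp ht).2))
  have hPpos : ∀ n ω, 0 < P n ω :=
    fun n ω => Finset.prod_pos (fun t _ => Real.exp_pos _)
  have hfle : ∀ t, ∀ᵐ ω ∂μ, f t ω ≤ Real.exp 1 := by
    intro t
    filter_upwards [hbdd t, hEbdd t] with ω h1 h2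
    have : -η * W t ω + c * E t ω ≤ 1 := by
      have h3 : -η * W t ω ≤ 0 := by
        have := mul_nonneg hη0.le h1.1; nlinarith
      have h4 : c * E t ω ≤ 1 := by nlinarith [h2.1, h2.2]
      linarith
    exact Real.exp_le_exp.mpr this
  have hall : ∀ᵐ ω ∂μ, ∀ t, f t ω ≤ Real.exp 1 := ae_all_iff.mpr hfle
  have hPle : ∀ n, ∀ᵐ ω ∂μ, P n ω ≤ Real.exp 1 ^ n := by
    intro n
    filter_upwards [hall] with ω h
    calc P n ω ≤ ∏ t ∈ Finset.Icc 1 n, Real.exp 1 :=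
          Finset.prod_le_prod (fun t _ => (Real.exp_pos _).le) (fun t _ => h t)
      _ = Real.exp 1 ^ (Finset.Icc 1 n).card := Finset.prod_const _
      _ = Real.exp 1 ^ n := by rw [Nat.card_Icc]; simp
  have hPint : ∀ n, Integrable (P n) μ := by
    intro n
    refine ⟨((hPSM n).mono (ℱ.le n)).aestronglyMeasurable,
      HasFiniteIntegral.of_bounded (C := Real.exp 1 ^ n) ?_⟩
    filter_upwards [hPle n] with ω h
    rw [Real.norm_eq_abs, abs_of_pos (hPpos n ω)]; exact h
  -- main induction
  show (∫ ω, P T ω ∂μ) ≤ 1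
  induction T with
  | zero =>
      simp [hP]
  | succ n ih =>
      refine le_trans ?_ ih
      -- split the product
      set q : Ω → ℝ := fun ω => P n ω * Real.exp (c * E (n+1) ω) with hq
      set g : Ω → ℝ := fun ω => Real.exp (-η * W (n+1) ω) with hg
      have hsplit : P (n+1) = q * g := by
        funext ω
        simp only [hP, hq, hg, hf, Pi.mul_apply]
        rw [Finset.prod_Icc_succ_top (Nat.le_add_left 1 n)]
        rw [Real.exp_add]
        ring
      have hqSM : StronglyMeasurable[ℱ n] q := by
        refine (hPSM n).mul ?_
        exact Real.continuous_exp.comp_stronglyMeasurable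
          ((stronglyMeasurable_condExp (f := W (n+1)) (m := ℱ n)).const_mul c)
      have hgm : AEStronglyMeasurable g μ := by
        exact Real.continuous_exp.comp_aestronglyMeasurable ((hWm (n+1)).const_mul (-η))
      have hgint : Integrable g μ := by
        refine ⟨hgm, HasFiniteIntegral.of_bounded (C := 1) ?_⟩
        filter_upwards [hbdd (n+1)] with ω h
        rw [Real.norm_eq_abs, abs_of_pos (Real.exp_pos _), ← Real.exp_zero]
        apply Real.exp_le_exp.mpr
        nlinarith [h.1]
      have hqgint : Integrable (q * g) μ := hsplit ▸ hPint (n+1)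
      have hcond : μ[q * g | ℱ n] =ᵐ[μ] q * μ[g | ℱ n] :=
        condExp_mul_of_stronglyMeasurable_left hqSM hqgint hgint
      -- bound the conditional expectation of g
      have hgle : g ≤ᵐ[μ] fun ω => 1 - c * W (n+1) ω := by
        filter_upwards [hbdd (n+1)] with ω h
        exact exp_le_one_sub_mul h
      have h1int : Integrable (fun ω => 1 - c * W (n+1) ω) μ :=
        (integrable_const 1).sub ((hWint (n+1)).const_mul c)
      have hcond2 : μ[g | ℱ n] ≤ᵐ[μ] fun ω => 1 - c * E (n+1) ω := by
        have h1 : μ[g | ℱ n] ≤ᵐ[μ] μ[(fun ω => 1 - c * W (n+1) ω) | ℱ n] :=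
          condExp_mono hgint h1int hgle
        have h2 : μ[(fun ω => 1 - c * W (n+1) ω) | ℱ n]
            =ᵐ[μ] μ[(fun _ => (1:ℝ)) | ℱ n] - μ[(fun ω => c * W (n+1) ω) | ℱ n] :=
          condExp_sub (integrable_const 1) ((hWint (n+1)).const_mul c) (ℱ n)
        have h3 : μ[(fun ω => c * W (n+1) ω) | ℱ n] =ᵐ[μ] fun ω => c * E (n+1) ω := by
          have := condExp_smul (μ := μ) (m := ℱ n) (c : ℝ) (W (n+1))
          filter_upwards [this] with ω hω
          simpa [Pi.smul_def, smul_eq_mul, hE] using hω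
        rw [condExp_const (ℱ.le n) (1:ℝ)] at h2
        filter_upwards [h1, h2, h3] with ω h1 h2 h3
        rw [h2] at h1
        simp only [Pi.sub_apply] at h1
        rw [h3] at h1
        exact h1
      -- pointwise: q * μ[g|ℱ n] ≤ P n
      have hkey : (q * μ[g | ℱ n]) ≤ᵐ[μ] P n := by
        filter_upwards [hcond2] with ω hω
        have hq0 : 0 ≤ q ω := by
          simp only [hq]
          exact mul_nonneg (hPpos n ω).le (Real.exp_pos _).le
        have h1 : (1:ℝ) - c * E (n+1) ω ≤ Real.exp (-(c * E (n+1) ω)) := by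
          linarith [Real.add_one_le_exp (-(c * E (n+1) ω))]
        calc q ω * (μ[g | ℱ n]) ω ≤ q ω * Real.exp (-(c * E (n+1) ω)) := by
              exact mul_le_mul_of_nonneg_left (le_trans hω h1) hq0
          _ = P n ω := by
              simp only [hq]
              rw [mul_assoc, ← Real.exp_add]
              simp
      -- put it together
      calc ∫ ω, P (n+1) ω ∂μ = ∫ ω, (q * g) ω ∂μ := by rw [hsplit]
        _ = ∫ ω, (μ[q * g | ℱ n]) ω ∂μ := (integral_condExp (ℱ.le n)).symm
        _ = ∫ ω, (q * μ[g | ℱ n]) ω ∂μ := integral_congr_ae hcond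
        _ ≤ ∫ ω, P n ω ∂μ :=
            integral_mono_ae (integrable_condExp.congr hcond) (hPint n) hkey
end

section
/- For any hypothesis class H ⊆ [0,1]^X and γ > 0, the fat-shattering dimension satisfies fat(H, γ) ≤ (1/γ + 1)·fat_V(H, γ/2). -/
open scoped ENNReal

/-- The `V_γ`-dimension of a class `H ⊆ [0,1]^X`. -/
noncomputable def fatVDim {X : Type*} (H : Set (X → ℝ)) (γ : ℝ) : ℕ∞ :=
  sSup {D : ℕ∞ | ∃ d : ℕ, D = d ∧ ∃ (τ : ℝ) (x : Fin d → X), τ ∈ Set.Icc (0 : ℝ) 1 ∧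
    ∀ A : Finset (Fin d), ∃ f ∈ H,
      (∀ i ∈ A, τ + γ ≤ f (x i)) ∧ (∀ i ∉ A, f (x i) ≤ τ - γ)}

/-- The fat-shattering (`P_γ`) dimension of a class `H ⊆ [0,1]^X`. -/
noncomputable def fatDim {X : Type*} (H : Set (X → ℝ)) (γ : ℝ) : ℕ∞ :=
  sSup {D : ℕ∞ | ∃ d : ℕ, D = d ∧ ∃ (s : Fin d → ℝ) (x : Fin d → X),
    (∀ i, s i ∈ Set.Icc (0 : ℝ) 1) ∧
    ∀ A : Finset (Fin d), ∃ f ∈ H,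
      (∀ i ∈ A, s i + γ ≤ f (x i)) ∧ (∀ i ∉ A, f (x i) ≤ s i - γ)}

lemma bucket_le_fatV {X : Type*} (H : Set (X → ℝ)) (γ : ℝ) (hγ : 0 < γ)
    {d : ℕ} (s : Fin d → ℝ) (x : Fin d → X)
    (hI : ∀ i, s i ∈ Set.Icc (0 : ℝ) 1)
    (hsh : ∀ A : Finset (Fin d), ∃ f ∈ H,
      (∀ i ∈ A, s i + γ ≤ f (x i)) ∧ (∀ i ∉ A, f (x i) ≤ s i - γ))
    (k : ℕ) :
    ((Finset.univ.filter (fun i : Fin d => ⌊s i / γ⌋₊ = k)).card : ℕ∞)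
      ≤ fatVDim H (γ / 2) := by
  set B := Finset.univ.filter (fun i : Fin d => ⌊s i / γ⌋₊ = k) with hB
  set b := B.card with hb
  apply le_sSup
  refine ⟨b, rfl, min (k * γ + γ / 2) 1, ?_⟩
  set e := B.equivFin.symm with he
  refine ⟨fun i => x (e i), ⟨le_min (by positivity) zero_le_one, min_le_right _ _⟩, ?_⟩
  intro A
  obtain ⟨f, hf, h1, h2⟩ := hsh (A.image (fun i => ((e i : Fin d))))
  have hbnd : ∀ i : Fin b, k * γ ≤ s ((e i : Fin d)) ∧ s ((e i : Fin d)) < (k + 1) * γ := by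
    intro i
    have hm : (e i : Fin d) ∈ Finset.univ.filter (fun i : Fin d => ⌊s i / γ⌋₊ = k) := (e i).2
    have hfl : ⌊s ((e i : Fin d)) / γ⌋₊ = k := (Finset.mem_filter.mp hm).2
    have hpos : 0 ≤ s ((e i : Fin d)) / γ := div_nonneg (hI _).1 hγ.le
    rw [Nat.floor_eq_iff hpos] at hfl
    constructor
    · have := hfl.1
      calc (k : ℝ) * γ ≤ (s ((e i : Fin d)) / γ) * γ := by
            apply mul_le_mul_of_nonneg_right this hγ.le
        _ = s ((e i : Fin d)) := div_mul_cancel₀ _ hγ.ne'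
    · have := hfl.2
      calc s ((e i : Fin d)) = (s ((e i : Fin d)) / γ) * γ := (div_mul_cancel₀ _ hγ.ne').symm
        _ < (k + 1) * γ := by
            apply mul_lt_mul_of_pos_right (by exact_mod_cast this) hγ
  refine ⟨f, hf, ?_, ?_⟩
  · intro i hi
    have hmem : ((e i : Fin d)) ∈ A.image (fun i => ((e i : Fin d))) :=
      Finset.mem_image_of_mem _ hi
    have := h1 _ hmem
    have hk := (hbnd i).1
    have : min (k * γ + γ / 2) 1 + γ / 2 ≤ s ((e i : Fin d)) + γ := by
      have : min (k * γ + γ / 2) 1 ≤ k * γ + γ / 2 := min_le_left _ _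
      nlinarith
    linarith [h1 _ hmem]
  · intro i hi
    have hmem : ((e i : Fin d)) ∉ A.image (fun i => ((e i : Fin d))) := by
      intro hc
      obtain ⟨j, hj, hje⟩ := Finset.mem_image.mp hc
      have : j = i := by
        apply e.injective
        exact Subtype.coe_injective hje
      exact hi (this ▸ hj)
    have h2' := h2 _ hmem
    have hk := (hbnd i).2
    have hle1 : s ((e i : Fin d)) ≤ 1 := (hI _).2
    have h3 : s ((e i : Fin d)) - γ + γ / 2 ≤ min (k * γ + γ / 2) 1 :=
      le_min (by nlinarith) (by nlinarith)
    linarith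

/-- For any `H ⊆ [0,1]^X` and `γ > 0`, `fat(H, γ) ≤ (1/γ + 1) · fat_V(H, γ/2)`. -/
theorem stmt17 {X : Type*} (H : Set (X → ℝ))
    (hH : ∀ f ∈ H, ∀ x, f x ∈ Set.Icc (0 : ℝ) 1) (γ : ℝ) (hγ : 0 < γ) :
    (fatDim H γ : ℝ≥0∞) ≤ ENNReal.ofReal (1 / γ + 1) * (fatVDim H (γ / 2) : ℝ≥0∞) := by
  set N : ℕ := ⌊1 / γ⌋₊ + 1 with hN
  have key : fatDim H γ ≤ (N : ℕ∞) * fatVDim H (γ / 2) := by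
    apply sSup_le
    rintro D ⟨d, rfl, s, x, hI, hsh⟩
    have hcard : d = ∑ k ∈ Finset.range N,
        (Finset.univ.filter (fun i : Fin d => ⌊s i / γ⌋₊ = k)).card := by
      have := Finset.card_eq_sum_card_fiberwise
        (s := (Finset.univ : Finset (Fin d))) (f := fun i : Fin d => ⌊s i / γ⌋₊) (t := Finset.range N)
        (fun i _ => by
          rw [Finset.mem_coe, Finset.mem_range, hN]
          have h1 : s i / γ ≤ 1 / γ := by gcongr; exact (hI i).2
          have h2 : ⌊s i / γ⌋₊ ≤ ⌊1 / γ⌋₊ := Nat.floor_mono h1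
          show ⌊s i / γ⌋₊ < ⌊1 / γ⌋₊ + 1
          omega)
      simpa using this
    calc ((d : ℕ∞)) = ((∑ k ∈ Finset.range N,
          (Finset.univ.filter (fun i : Fin d => ⌊s i / γ⌋₊ = k)).card : ℕ) : ℕ∞) := by
          exact_mod_cast hcard
      _ = ∑ k ∈ Finset.range N,
          ((Finset.univ.filter (fun i : Fin d => ⌊s i / γ⌋₊ = k)).card : ℕ∞) :=
          Nat.cast_sum _ _
      _ ≤ ∑ _k ∈ Finset.range N, fatVDim H (γ / 2) :=
          Finset.sum_le_sum (fun k _ => bucket_le_fatV H γ hγ s x hI hsh k)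
      _ = (N : ℕ∞) * fatVDim H (γ / 2) := by
          rw [Finset.sum_const, Finset.card_range, nsmul_eq_mul]
  calc (fatDim H γ : ℝ≥0∞) ≤ (((N : ℕ∞) * fatVDim H (γ / 2) : ℕ∞) : ℝ≥0∞) := by
        exact_mod_cast ENat.toENNReal_le.mpr key
    _ = (N : ℝ≥0∞) * (fatVDim H (γ / 2) : ℝ≥0∞) := by
        rw [ENat.toENNReal_mul]; norm_num
    _ ≤ ENNReal.ofReal (1 / γ + 1) * (fatVDim H (γ / 2) : ℝ≥0∞) := by
        apply mul_le_mul_left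
        rw [← ENNReal.ofReal_natCast]
        apply ENNReal.ofReal_le_ofReal
        push_cast [hN]
        have := Nat.floor_le (a := 1 / γ) (by positivity)
        linarith
end

section
/- Let H ⊆ [0,1]^X, γ ∈ (0,1), m = ⌈4n/γ⌉, ρ = 1/m, τ_i = iρ. Suppose for each i ∈ [m] we have a {0,1,⋆}-valued predictor ĝ_i for the thresholded class G_i = {ψ_{γ,τ_i} ∘ f : f ∈ H} making at most fat_V(H, γ) leave-one-out mistakes (under the loss that ignores ⋆ targets) on any realizable n-point sample. Then the real-valued predictor f̂(x; S) = ρ·∑_{i=1}^m 1{ĝ_i(x; S) = 1} satisfies, for any sample realizable by f* ∈ H, the leave-one-out absolute-loss bound ∑_{i=1}^n |f̂(x_i; S^{\i}) − f*(x_i)| ≤ (n+1)γ + fat_V(H, γ). -/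
open Finset

/-- Remove the `i`-th entry from a tuple `s : Fin n → α`, yielding a tuple of length `n - 1`. -/
def eraseIdxFn {α : Type*} {n : ℕ} (s : Fin n → α) (i : Fin n) : Fin (n - 1) → α :=
  fun j =>
    if h : (j : ℕ) < (i : ℕ) then s ⟨j, by have := j.isLt; have := i.isLt; omega⟩
    else s ⟨(j : ℕ) + 1, by have := j.isLt; omega⟩

/-- The thresholding operator `ψ_{γ,τ}` with values in `{0, 1, ⋆}`, encoded as
`Option Bool` with `none = ⋆`. -/
noncomputable def psi (γ τ z : ℝ) : Option Bool :=
  if z ≤ τ - γ then some false else if τ + γ ≤ z then some true else none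

/-- The loss for `{0,1,⋆}`-valued targets, which ignores `⋆` targets. -/
def lossb (yhat y : Option Bool) : ℝ :=
  if yhat ≠ y ∧ y ≠ none then 1 else 0

lemma lossb_nonneg (a b : Option Bool) : 0 ≤ lossb a b := by
  unfold lossb; split <;> norm_num

/-- Key single-point bound. -/
lemma key_bound (m : ℕ) (hm : 0 < m) (ρ γ z : ℝ) (hρ : ρ = 1 / (m : ℝ))
    (hγ : 0 < γ) (hz0 : 0 ≤ z) (hz1 : z ≤ 1) (g : Fin m → Option Bool) :
    |ρ * (∑ i : Fin m, (if g i = some true then (1 : ℝ) else 0)) - z|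
      ≤ γ + ρ + ρ * ∑ i : Fin m, lossb (g i) (psi γ (((i : ℕ) + 1) * ρ) z) := by
  have hm' : (0 : ℝ) < m := by exact_mod_cast hm
  have hρ0 : 0 < ρ := by rw [hρ]; positivity
  have hρm : ρ * m = 1 := by rw [hρ]; field_simp
  set C := ∑ i : Fin m, (if g i = some true then (1 : ℝ) else 0) with hC
  set M := ∑ i : Fin m, lossb (g i) (psi γ (((i : ℕ) + 1) * ρ) z) with hM
  have hM0 : 0 ≤ M := Finset.sum_nonneg fun i _ => lossb_nonneg _ _
  -- upper bound on C
  have hCup : C ≤ (z + γ) * m + M := by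
    set K := ⌊(z + γ) * m⌋₊ with hK
    have step1 : C ≤ (∑ i : Fin m, (if ((i : ℕ) < K) then (1 : ℝ) else 0)) + M := by
      rw [hC, hM, ← Finset.sum_add_distrib]
      apply Finset.sum_le_sum
      intro i _
      by_cases hτ : (((i : ℕ) : ℝ) + 1) * ρ < z + γ
      · have hiK : (i : ℕ) < K := by
          have h2 : (((i : ℕ) : ℝ) + 1) * ρ * m < (z + γ) * m :=
            mul_lt_mul_of_pos_right hτ hm'
          have h3 : (((i : ℕ) : ℝ) + 1) ≤ (z + γ) * m := by nlinarith
          have h4 : ((i : ℕ) + 1 : ℕ) ≤ K := Nat.le_floor (by push_cast; exact h3)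
          omega
        rw [if_pos hiK]
        have := lossb_nonneg (g i) (psi γ (((i : ℕ) + 1) * ρ) z)
        split <;> linarith
      · have hz : z ≤ (((i : ℕ) : ℝ) + 1) * ρ - γ := by push_neg at hτ; linarith
        have hpsi' : psi γ ((((i : ℕ) : ℝ) + 1) * ρ) z = some false := by
          unfold psi; rw [if_pos hz]
        rw [hpsi']
        by_cases hg : g i = some true
        · rw [if_pos hg]
          have : lossb (g i) (some false) = 1 := by
            unfold lossb; rw [if_pos]; exact ⟨by rw [hg]; simp, by simp⟩
          rw [this]; split <;> norm_num
        · rw [if_neg hg]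
          have := lossb_nonneg (g i) (some false)
          split <;> linarith
    have step2 : (∑ i : Fin m, (if ((i : ℕ) < K) then (1 : ℝ) else 0)) ≤ (z + γ) * m := by
      have h1 : (∑ i : Fin m, (if ((i : ℕ) < K) then (1 : ℝ) else 0))
          = ∑ k ∈ Finset.range m, (if k < K then (1 : ℝ) else 0) :=
        Fin.sum_univ_eq_sum_range (fun k => if k < K then (1 : ℝ) else 0) m
      have h2 : ∑ k ∈ Finset.range m, (if k < K then (1 : ℝ) else 0)
          = (((Finset.range m).filter (fun k => k < K)).card : ℝ) := by
        rw [Finset.sum_boole]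
      have h3 : ((Finset.range m).filter (fun k => k < K)).card ≤ K := by
        calc ((Finset.range m).filter (fun k => k < K)).card
            ≤ (Finset.range K).card := by
              apply Finset.card_le_card
              intro a ha
              simp only [Finset.mem_filter, Finset.mem_range] at ha ⊢
              exact ha.2
          _ = K := Finset.card_range K
      have h4 : (K : ℝ) ≤ (z + γ) * m := Nat.floor_le (by positivity)
      rw [h1, h2]
      calc (((Finset.range m).filter (fun k => k < K)).card : ℝ) ≤ (K : ℝ) := by
            exact_mod_cast h3
        _ ≤ (z + γ) * m := h4
    linarith
  -- lower bound on C
  have hClo : (z - γ) * m - 1 - M ≤ C := by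
    have step1 : (∑ i : Fin m, (if ((((i : ℕ) : ℝ) + 1) * ρ ≤ z - γ) then (1 : ℝ) else 0)) - M
        ≤ C := by
      rw [hC, hM, ← Finset.sum_sub_distrib]
      apply Finset.sum_le_sum
      intro i _
      by_cases hτ : (((i : ℕ) : ℝ) + 1) * ρ ≤ z - γ
      · rw [if_pos hτ]
        have hpsi : psi γ ((((i : ℕ) : ℝ) + 1) * ρ) z = some true := by
          unfold psi
          rw [if_neg (by linarith), if_pos (by linarith)]
        rw [hpsi]
        by_cases hg : g i = some true
        · rw [if_pos hg]
          have := lossb_nonneg (g i) (some true)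
          linarith
        · rw [if_neg hg]
          have : lossb (g i) (some true) = 1 := by
            unfold lossb; rw [if_pos]; exact ⟨by simpa using hg, by simp⟩
          rw [this]; norm_num
      · rw [if_neg hτ]
        have h1 := lossb_nonneg (g i) (psi γ ((((i : ℕ) : ℝ) + 1) * ρ) z)
        split <;> linarith
    have step2 : (z - γ) * m - 1
        ≤ ∑ i : Fin m, (if ((((i : ℕ) : ℝ) + 1) * ρ ≤ z - γ) then (1 : ℝ) else 0) := by
      by_cases hzg : z - γ < 0
      · have hpos : (0 : ℝ) ≤ ∑ i : Fin m, (if ((((i : ℕ) : ℝ) + 1) * ρ ≤ z - γ) then (1 : ℝ) else 0) := by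
          apply Finset.sum_nonneg; intro i _; split <;> norm_num
        nlinarith
      · push_neg at hzg
        set K' := ⌊(z - γ) * m⌋₊ with hK'
        have hK'm : K' ≤ m := by
          have : (z - γ) * m ≤ (m : ℝ) := by nlinarith
          calc K' ≤ ⌊(m : ℝ)⌋₊ := Nat.floor_le_floor this
            _ = m := Nat.floor_natCast m
        have h1 : ∀ i : Fin m, (if ((i : ℕ) < K') then (1 : ℝ) else 0)
            ≤ (if ((((i : ℕ) : ℝ) + 1) * ρ ≤ z - γ) then (1 : ℝ) else 0) := by
          intro i
          by_cases hi : (i : ℕ) < K'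
          · rw [if_pos hi]
            have h2 : ((i : ℕ) + 1 : ℝ) ≤ (K' : ℝ) := by exact_mod_cast hi
            have h3 : (K' : ℝ) ≤ (z - γ) * m := Nat.floor_le (by positivity)
            have h4 : (((i : ℕ) : ℝ) + 1) * ρ ≤ z - γ := by
              have h5 : (((i : ℕ) : ℝ) + 1) * ρ * m ≤ ((z - γ) * m) * (ρ * m) := by
                rw [hρm]; nlinarith
              nlinarith
            rw [if_pos h4]
          · rw [if_neg hi]; split <;> norm_num
        have h2 : (K' : ℝ) ≤ ∑ i : Fin m, (if ((i : ℕ) < K') then (1 : ℝ) else 0) := by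
          have h3 : (∑ i : Fin m, (if ((i : ℕ) < K') then (1 : ℝ) else 0))
              = ∑ k ∈ Finset.range m, (if k < K' then (1 : ℝ) else 0) :=
            Fin.sum_univ_eq_sum_range (fun k => if k < K' then (1 : ℝ) else 0) m
          have h4 : ∑ k ∈ Finset.range K', (1 : ℝ)
              ≤ ∑ k ∈ Finset.range m, (if k < K' then (1 : ℝ) else 0) := by
            have := Finset.sum_le_sum_of_subset_of_nonneg
              (Finset.range_subset_range.2 hK'm)
              (f := fun k => if k < K' then (1 : ℝ) else 0)
              (fun k _ _ => by split <;> norm_num)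
            calc ∑ k ∈ Finset.range K', (1 : ℝ)
                = ∑ k ∈ Finset.range K', (if k < K' then (1 : ℝ) else 0) := by
                  apply Finset.sum_congr rfl
                  intro k hk
                  rw [if_pos (Finset.mem_range.1 hk)]
              _ ≤ _ := this
          rw [h3]
          simpa using h4
        have h5 : (z - γ) * m - 1 ≤ (K' : ℝ) := by
          have := Nat.lt_floor_add_one ((z - γ) * m)
          linarith
        calc (z - γ) * m - 1 ≤ (K' : ℝ) := h5
          _ ≤ ∑ i : Fin m, (if ((i : ℕ) < K') then (1 : ℝ) else 0) := h2
          _ ≤ _ := Finset.sum_le_sum (fun i _ => h1 i)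
    linarith
  -- combine
  rw [abs_le]
  constructor
  · have h1 : ρ * ((z - γ) * m - 1 - M) ≤ ρ * C := by
      apply mul_le_mul_of_nonneg_left hClo (le_of_lt hρ0)
    have h2 : ρ * ((z - γ) * m - 1 - M) = (z - γ) * (ρ * m) - ρ - ρ * M := by ring
    rw [hρm] at h2
    nlinarith
  · have h1 : ρ * C ≤ ρ * ((z + γ) * m + M) := by
      apply mul_le_mul_of_nonneg_left hCup (le_of_lt hρ0)
    have h2 : ρ * ((z + γ) * m + M) = (z + γ) * (ρ * m) + ρ * M := by ring
    rw [hρm] at h2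
    nlinarith

/-- Construction of a real-valued one-inclusion predictor from thresholded partial
predictors: if for each `i ∈ [m]` (with `m = ⌈4n/γ⌉`, `ρ = 1/m`, `τ_i = iρ`) the
predictor `ĝ_i` makes at most `D` leave-one-out mistakes (under the `⋆`-ignoring loss)
on every `n`-point sample realizable by the thresholded class `{ψ_{γ,τ_i} ∘ f : f ∈ H}`,
then the real-valued predictor `f̂(x; S) = ρ ∑_i 1{ĝ_i(x; S) = 1}` has leave-one-out
absolute loss at most `(n+1)γ + D` on every sample realizable by `f ∈ H`. -/
theorem stmt18 {X : Type*} (H : Set (X → ℝ))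
    (hH : ∀ f ∈ H, ∀ x, f x ∈ Set.Icc (0 : ℝ) 1)
    (γ : ℝ) (hγ : γ ∈ Set.Ioo (0 : ℝ) 1) (n : ℕ) (hn : 0 < n)
    (m : ℕ) (hm : m = ⌈4 * (n : ℝ) / γ⌉₊) (ρ : ℝ) (hρ : ρ = 1 / (m : ℝ))
    (D : ℝ)
    (ghat : Fin m → (k : ℕ) → X → (Fin k → X × Option Bool) → Option Bool)
    (hLOO : ∀ (i : Fin m), ∀ f ∈ H, ∀ s : Fin n → X,
      ∑ j : Fin n,
        lossb
          (ghat i (n - 1) (s j)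
            (eraseIdxFn (fun j' => (s j', psi γ (((i : ℕ) + 1) * ρ) (f (s j')))) j))
          (psi γ (((i : ℕ) + 1) * ρ) (f (s j))) ≤ D)
    (f : X → ℝ) (hf : f ∈ H) (x : Fin n → X) :
    ∑ j : Fin n,
        |(ρ * ∑ i : Fin m,
            (if ghat i (n - 1) (x j)
                (eraseIdxFn (fun j' => (x j', psi γ (((i : ℕ) + 1) * ρ) (f (x j')))) j)
              = some true then (1 : ℝ) else 0))
          - f (x j)| ≤ ((n : ℝ) + 1) * γ + D := by
  obtain ⟨hγ0, hγ1⟩ := hγ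
  have hmpos : 0 < m := by
    rw [hm]
    apply Nat.ceil_pos.2
    positivity
  have hm' : (0 : ℝ) < m := by exact_mod_cast hmpos
  have hρ0 : 0 < ρ := by rw [hρ]; positivity
  have hρm : ρ * m = 1 := by rw [hρ]; field_simp
  set L : Fin m → Fin n → ℝ := fun i j =>
    lossb
      (ghat i (n - 1) (x j)
        (eraseIdxFn (fun j' => (x j', psi γ (((i : ℕ) + 1) * ρ) (f (x j')))) j))
      (psi γ (((i : ℕ) + 1) * ρ) (f (x j))) with hL
  have key : ∀ j : Fin n,
      |(ρ * ∑ i : Fin m,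
            (if ghat i (n - 1) (x j)
                (eraseIdxFn (fun j' => (x j', psi γ (((i : ℕ) + 1) * ρ) (f (x j')))) j)
              = some true then (1 : ℝ) else 0))
          - f (x j)| ≤ γ + ρ + ρ * ∑ i : Fin m, L i j := by
    intro j
    have hz := hH f hf (x j)
    exact key_bound m hmpos ρ γ (f (x j)) hρ hγ0 hz.1 hz.2
      (fun i => ghat i (n - 1) (x j)
        (eraseIdxFn (fun j' => (x j', psi γ (((i : ℕ) + 1) * ρ) (f (x j')))) j))
  have hsum : ∑ j : Fin n, ∑ i : Fin m, L i j ≤ (m : ℝ) * D := by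
    rw [Finset.sum_comm]
    calc ∑ i : Fin m, ∑ j : Fin n, L i j ≤ ∑ _i : Fin m, D := by
          apply Finset.sum_le_sum
          intro i _
          exact hLOO i f hf x
      _ = (m : ℝ) * D := by simp [mul_comm]
  have hnρ : (n : ℝ) * ρ ≤ γ := by
    have h1 : 4 * (n : ℝ) / γ ≤ (m : ℝ) := by rw [hm]; exact Nat.le_ceil _
    have h2 : 4 * (n : ℝ) ≤ γ * m := by
      rw [div_le_iff₀ hγ0] at h1; nlinarith
    have h3 : (n : ℝ) * ρ * m = (n : ℝ) * (ρ * m) := by ring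
    have hn' : (1 : ℝ) ≤ n := by exact_mod_cast hn
    nlinarith [mul_pos hρ0 hm']
  calc ∑ j : Fin n,
        |(ρ * ∑ i : Fin m,
            (if ghat i (n - 1) (x j)
                (eraseIdxFn (fun j' => (x j', psi γ (((i : ℕ) + 1) * ρ) (f (x j')))) j)
              = some true then (1 : ℝ) else 0))
          - f (x j)|
      ≤ ∑ j : Fin n, (γ + ρ + ρ * ∑ i : Fin m, L i j) :=
        Finset.sum_le_sum fun j _ => key j
    _ = (n : ℝ) * γ + (n : ℝ) * ρ + ρ * ∑ j : Fin n, ∑ i : Fin m, L i j := by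
        rw [Finset.sum_add_distrib, Finset.sum_add_distrib, ← Finset.mul_sum]
        simp [Finset.sum_const, Finset.card_univ, mul_comm]
        try ring
    _ ≤ ((n : ℝ) + 1) * γ + D := by
        have h1 : ρ * ∑ j : Fin n, ∑ i : Fin m, L i j ≤ ρ * ((m : ℝ) * D) :=
          mul_le_mul_of_nonneg_left hsum (le_of_lt hρ0)
        have h2 : ρ * ((m : ℝ) * D) = (ρ * m) * D := by ring
        rw [hρm] at h2
        nlinarith
end
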